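/- The character of the preference order induced by voter basis vector v_A equals { S ⊆ [n] : A ⊆ S or A ∩ S = ∅ }. -/

import Mathlib

/-- The voter basis vector `v_A`, as a utility function on outcomes. -/
def voter {n : ℕ} (A : Finset (Fin n)) (x : Finset (Fin n)) : ℚ :=
  if Even (x ∩ A).card then 1 else 0

lemma voter_union {n : ℕ} (A : Finset (Fin n)) {x u : Finset (Fin n)} (h : Disjoint x u) :
    voter A (x ∪ u) = if Even ((x ∩ A).card + (u ∩ A).card) then 1 else 0 := by
  unfold voter
  rw [Finset.union_inter_distrib_right, Finset.card_union_of_disjoint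
    (h.mono Finset.inter_subset_left Finset.inter_subset_left)]

theorem voter_character (n : ℕ) (A : Finset (Fin n)) :
    ∀ S : Finset (Fin n),
      ((∀ xS yS u v : Finset (Fin n), xS ⊆ S → yS ⊆ S → u ⊆ Sᶜ → v ⊆ Sᶜ →
          (voter A (xS ∪ u) ≥ voter A (yS ∪ u) ↔ voter A (xS ∪ v) ≥ voter A (yS ∪ v)))
        ↔ (A ⊆ S ∨ A ∩ S = ∅)) := by
  intro S
  constructor
  · intro h
    by_contra hc
    push_neg at hc
    obtain ⟨h1, h2⟩ := hc
    obtain ⟨a, haA, haS⟩ := Finset.not_subset.mp h1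
    obtain ⟨b, hb⟩ := h2
    rw [Finset.mem_inter] at hb
    obtain ⟨hbA, hbS⟩ := hb
    have hne : b ≠ a := fun e => haS (e ▸ hbS)
    have key := h {b} ∅ ∅ {a} (Finset.singleton_subset_iff.mpr hbS)
      (Finset.empty_subset S) (Finset.empty_subset _)
      (Finset.singleton_subset_iff.mpr (Finset.mem_compl.mpr haS))
    have c1 : voter A ({b} ∪ ∅) = 0 := by
      simp [voter, Finset.singleton_inter_of_mem hbA]
    have c2 : voter A ((∅ : Finset (Fin n)) ∪ ∅) = 1 := by simp [voter]
    have c3 : voter A ({b} ∪ {a}) = 1 := by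
      have heq : ({b} ∪ {a} : Finset (Fin n)) ∩ A = {b, a} := by
        apply Finset.inter_eq_left.mpr
        intro x hx
        simp only [Finset.mem_union, Finset.mem_singleton] at hx
        rcases hx with rfl | rfl
        · exact hbA
        · exact haA
      have : ({b} ∪ {a} : Finset (Fin n)) = {b, a} := by
        ext x; simp
      rw [this] at heq ⊢
      simp [voter, heq, Finset.card_insert_of_notMem (Finset.notMem_singleton.mpr hne)]
    have c4 : voter A ((∅ : Finset (Fin n)) ∪ {a}) = 0 := by
      simp [voter, Finset.singleton_inter_of_mem haA]
    rw [c1, c2, c3, c4] at key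
    have := key.mpr (by norm_num)
    norm_num at this
  · intro h xS yS u v hxS hyS hu hv
    rcases h with hAS | hAS
    · have hu' : u ∩ A = ∅ := Finset.eq_empty_of_forall_notMem fun x hx => by
        rw [Finset.mem_inter] at hx
        exact (Finset.mem_compl.mp (hu hx.1)) (hAS hx.2)
      have hv' : v ∩ A = ∅ := Finset.eq_empty_of_forall_notMem fun x hx => by
        rw [Finset.mem_inter] at hx
        exact (Finset.mem_compl.mp (hv hx.1)) (hAS hx.2)
      have dxu : Disjoint xS u := (disjoint_compl_right.mono hxS hu)
      have dyu : Disjoint yS u := (disjoint_compl_right.mono hyS hu)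
      have dxv : Disjoint xS v := (disjoint_compl_right.mono hxS hv)
      have dyv : Disjoint yS v := (disjoint_compl_right.mono hyS hv)
      rw [voter_union A dxu, voter_union A dyu, voter_union A dxv, voter_union A dyv,
        hu', hv']
    · have hx' : xS ∩ A = ∅ := Finset.eq_empty_of_forall_notMem fun x hx => by
        rw [Finset.mem_inter] at hx
        have : x ∈ A ∩ S := Finset.mem_inter.mpr ⟨hx.2, hxS hx.1⟩
        simp [hAS] at this
      have hy' : yS ∩ A = ∅ := Finset.eq_empty_of_forall_notMem fun x hx => by
        rw [Finset.mem_inter] at hx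
        have : x ∈ A ∩ S := Finset.mem_inter.mpr ⟨hx.2, hyS hx.1⟩
        simp [hAS] at this
      have dxu : Disjoint xS u := (disjoint_compl_right.mono hxS hu)
      have dyu : Disjoint yS u := (disjoint_compl_right.mono hyS hu)
      have dxv : Disjoint xS v := (disjoint_compl_right.mono hxS hv)
      have dyv : Disjoint yS v := (disjoint_compl_right.mono hyS hv)
      rw [voter_union A dxu, voter_union A dyu, voter_union A dxv, voter_union A dyv,
        hx', hy']
      tauto
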